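/- Let Q = [[a, b], [c, d]] be an invertible 2 × 2 complex matrix with d ≠ 0 and c = −a·conj(b)/conj(d). Define A_{ij} = |Q_{ij}| and B_{ij} = |(Q⁻¹)_{ij}|. Then for all indices k, l ∈ {1, 2}: ∑_{j=1}^{2} A_{k,j} · B_{j,l} ≤ 1. -/

import Mathlib

open Matrix Finset

set_option maxHeartbeats 1000000 in
/-- Property `(I)` (Lemma 4 of the paper): if `Q = !![a, b; c, d]` is an
invertible `2 × 2` complex matrix with `c = -a * conj b / conj d`, then with
`A i j = |Q i j|` and `B i j = |Q⁻¹ i j|`, for all `k, l` we have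
`∑ j, A k j * B j l ≤ 1`. -/
theorem property_I_of_qubit_solution
    (a b c d : ℂ) (hd : d ≠ 0)
    (hc : c = -a * (starRingEnd ℂ) b / (starRingEnd ℂ) d)
    (Q : Matrix (Fin 2) (Fin 2) ℂ) (hQ : Q = !![a, b; c, d])
    (hinv : IsUnit Q.det)
    (k l : Fin 2) :
    ∑ j : Fin 2, ‖Q k j‖ * ‖Q⁻¹ j l‖ ≤ 1 := by
  have hdet2 : Q.det = a * d - b * c := by rw [hQ, Matrix.det_fin_two_of]
  have hdet0 : Q.det ≠ 0 := by
    intro h; rw [h] at hinv; simpa using hinv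
  have ha : a ≠ 0 := by
    intro ha
    apply hdet0
    rw [hdet2, hc, ha]
    ring
  have hcd : (starRingEnd ℂ) d ≠ 0 := by simpa using hd
  have hQinv : Q⁻¹ = Q.det⁻¹ • !![d, -b; -c, a] := by
    rw [Matrix.inv_def, Ring.inverse_eq_inv', hQ, Matrix.adjugate_fin_two_of]
  -- key identity for the determinant's absolute value
  have h1 : (starRingEnd ℂ) d * Q.det =
      a * ((‖d‖ ^ 2 + ‖b‖ ^ 2 : ℝ) : ℂ) := by
    rw [hdet2, hc]
    push_cast [Complex.sq_norm]
    rw [← Complex.mul_conj, ← Complex.mul_conj]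
    field_simp
    ring
  have hD : ‖d‖ * ‖Q.det‖ =
      ‖a‖ * (‖b‖ ^ 2 + ‖d‖ ^ 2) := by
    have := congrArg (‖·‖) h1
    rw [norm_mul, norm_mul, Complex.norm_conj, Complex.norm_real, Real.norm_eq_abs] at this
    rw [this, abs_of_nonneg (by positivity)]
    ring
  have habsc : ‖c‖ = ‖a‖ * ‖b‖ / ‖d‖ := by
    simp [hc, norm_div, Complex.norm_conj]
  have hγ : 0 < ‖d‖ := norm_pos_iff.mpr hd
  have hDpos : 0 < ‖Q.det‖ := norm_pos_iff.mpr hdet0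
  have hα : 0 ≤ ‖a‖ := norm_nonneg a
  have hβ : 0 ≤ ‖b‖ := norm_nonneg b
  set α := ‖a‖
  set β := ‖b‖
  set γ := ‖d‖
  set D := ‖Q.det‖ with hDdef
  have e00 : ‖Q⁻¹ 0 0‖ = D⁻¹ * γ := by
    rw [hQinv]; simp [Matrix.smul_apply, smul_eq_mul, norm_inv, ← hDdef, γ]
  have e01 : ‖Q⁻¹ 0 1‖ = D⁻¹ * β := by
    rw [hQinv]; simp [Matrix.smul_apply, smul_eq_mul, norm_inv, ← hDdef, β]
  have e10 : ‖Q⁻¹ 1 0‖ = D⁻¹ * (α * β / γ) := by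
    rw [hQinv]; simp [Matrix.smul_apply, smul_eq_mul, norm_inv, habsc, ← hDdef]
  have e11 : ‖Q⁻¹ 1 1‖ = D⁻¹ * α := by
    rw [hQinv]; simp [Matrix.smul_apply, smul_eq_mul, norm_inv, ← hDdef, α]
  have f00 : ‖Q 0 0‖ = α := by rw [hQ]; simp [α]
  have f01 : ‖Q 0 1‖ = β := by rw [hQ]; simp [β]
  have f10 : ‖Q 1 0‖ = α * β / γ := by rw [hQ]; simp [habsc]
  have f11 : ‖Q 1 1‖ = γ := by rw [hQ]; simp [γ]
  fin_cases k <;> fin_cases l <;>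
    simp only [Fin.sum_univ_two, Fin.zero_eta, Fin.mk_one, e00, e01, e10, e11,
      f00, f01, f10, f11]
  · -- k=0, l=0
    have h : α * (D⁻¹ * γ) + β * (D⁻¹ * (α * β / γ)) = 1 := by
      field_simp
      nlinarith [hD]
    linarith [h]
  · -- k=0, l=1
    have h2 : α * (D⁻¹ * β) + β * (D⁻¹ * α) = 2 * α * β / D := by ring
    rw [h2, div_le_one hDpos]
    nlinarith [hD, mul_nonneg hα (sq_nonneg (β - γ))]
  · -- k=1, l=0
    have h2 : α * β / γ * (D⁻¹ * γ) + γ * (D⁻¹ * (α * β / γ)) = 2 * α * β / D := by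
      field_simp
      ring
    rw [h2, div_le_one hDpos]
    nlinarith [hD, mul_nonneg hα (sq_nonneg (β - γ))]
  · -- k=1, l=1
    have h : α * β / γ * (D⁻¹ * β) + γ * (D⁻¹ * α) = 1 := by
      field_simp
      nlinarith [hD]
    linarith [h]
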